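/- Let α > -1/2 and ε > 0. There exists δ ∈ (0,1/2) depending only on α such that for every K ∈ ℕ₊, the function a(u) = δ c^{-1}(1-δ)^{-1} K^{1/2} for u ∈ (cδK^{-1/2}, cK^{-1/2}) and a(u) = -c^{-1} K^{1/2} for u ∈ (0, cδK^{-1/2}) (and 0 otherwise) is, up to a universal constant multiple, an H¹(ℝ₊)-atom, and satisfies ∑_{k=0}^∞ |⟨a, φ_k^α⟩| / (k+1)^{3/4-ε} ≳ K^ε, with implicit constant independent of K. Here c > 0 is the constant from the lower estimate of φ_k^α near 0. -/

import Mathlib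

open MeasureTheory Set

/-- The generalized Laguerre polynomial `L_k^α(x)`. -/
noncomputable def lag (α : ℝ) (k : ℕ) (x : ℝ) : ℝ :=
  ∑ i ∈ Finset.range (k + 1),
    (-1 : ℝ) ^ i *
      (Real.Gamma ((k : ℝ) + α + 1) /
        (Real.Gamma ((i : ℝ) + α + 1) * (Nat.factorial (k - i)) * (Nat.factorial i))) *
      x ^ i

/-- The Laguerre function of Hermite type `φ_k^α(u)`. -/
noncomputable def phi (α : ℝ) (k : ℕ) (u : ℝ) : ℝ :=
  Real.sqrt (2 * (Nat.factorial k) / Real.Gamma ((k : ℝ) + α + 1)) *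
    lag α k (u ^ 2) * u ^ (α + 1 / 2 : ℝ) * Real.exp (-u ^ 2 / 2)


/-- An `H¹(ℝ₊)`-atom: supported in (an interval ball) ∩ `[0,∞)`, with vanishing
integral and the size condition. -/
def IsH1PlusAtom1 (a : ℝ → ℝ) : Prop :=
  Measurable a ∧
    ∃ z rad : ℝ, 0 < rad ∧
      Function.support a ⊆ Metric.ball z rad ∩ Set.Ici 0 ∧
      (∫ u, a u) = 0 ∧
      ∀ u, |a u| ≤ ((volume (Metric.ball z rad ∩ Set.Ici (0 : ℝ))).toReal)⁻¹

/-- The counterexample function `a` of the paper: `a = δc⁻¹(1-δ)⁻¹√K` on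
`(cδK^{-1/2}, cK^{-1/2})`, `a = -c⁻¹√K` on `(0, cδK^{-1/2})`, and `0` otherwise. -/
noncomputable def atomFun (c δ : ℝ) (K : ℕ) (u : ℝ) : ℝ :=
  Set.indicator (Set.Ioo (c * δ * ((K : ℝ)) ^ (-(1 : ℝ) / 2)) (c * ((K : ℝ)) ^ (-(1 : ℝ) / 2)))
      (fun _ => δ * Real.sqrt K / (c * (1 - δ))) u +
    Set.indicator (Set.Ioo 0 (c * δ * ((K : ℝ)) ^ (-(1 : ℝ) / 2)))
      (fun _ => -(Real.sqrt K / c)) u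

lemma phi_meas (α : ℝ) (k : ℕ) : Measurable (phi α k) := by unfold phi lag; fun_prop

lemma rpow_Ioo_integral (a b p : ℝ) (hab : a ≤ b) (hp : 0 ≤ p) :
    ∫ u in Set.Ioo a b, u ^ p = (b ^ (p+1) - a ^ (p+1))/(p+1) := by
  rw [← MeasureTheory.integral_Ioc_eq_integral_Ioo, ← intervalIntegral.integral_of_le hab,
    integral_rpow (Or.inl (by linarith : (-1:ℝ) < p))]

lemma rpow_intOn (a b p : ℝ) (hp : -1 < p) : IntegrableOn (fun u : ℝ => u ^ p) (Set.Ioo a b) :=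
  (intervalIntegral.intervalIntegrable_rpow' hp).1.mono_set Set.Ioo_subset_Ioc_self

lemma phi_est (α A B c : ℝ) (hα : -(1/2:ℝ) < α) (hA : 0 < A)
    (hbound : ∀ k : ℕ, 1 ≤ k → ∀ u : ℝ, 0 < u → u ≤ c / Real.sqrt k →
      A * (k : ℝ) ^ (α / 2) * u ^ (α + 1 / 2 : ℝ) ≤ phi α k u ∧
        phi α k u ≤ B * (k : ℝ) ^ (α / 2) * u ^ (α + 1 / 2 : ℝ))
    (k : ℕ) (hk : 1 ≤ k) (a b : ℝ) (ha : 0 ≤ a) (hab : a ≤ b) (hb : b ≤ c / Real.sqrt k) :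
    IntegrableOn (phi α k) (Set.Ioo a b) ∧
    A * (k:ℝ) ^ (α/2) * ((b ^ (α+3/2:ℝ) - a ^ (α+3/2:ℝ))/(α+3/2)) ≤ (∫ u in Set.Ioo a b, phi α k u) ∧
    (∫ u in Set.Ioo a b, phi α k u) ≤ B * (k:ℝ) ^ (α/2) * ((b ^ (α+3/2:ℝ) - a ^ (α+3/2:ℝ))/(α+3/2)) := by
  have hp : (0:ℝ) < α + 1/2 := by linarith
  have key : ∀ u ∈ Set.Ioo a b,
      A * (k : ℝ) ^ (α / 2) * u ^ (α + 1 / 2 : ℝ) ≤ phi α k u ∧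
        phi α k u ≤ B * (k : ℝ) ^ (α / 2) * u ^ (α + 1 / 2 : ℝ) := fun u hu =>
    hbound k hk u (ha.trans_lt hu.1) (hu.2.le.trans hb)
  have intA : IntegrableOn (fun u => A * (k:ℝ)^(α/2) * u ^ (α+1/2:ℝ)) (Set.Ioo a b) :=
    (rpow_intOn a b _ (by linarith)).const_mul _
  have intB : IntegrableOn (fun u => B * (k:ℝ)^(α/2) * u ^ (α+1/2:ℝ)) (Set.Ioo a b) :=
    (rpow_intOn a b _ (by linarith)).const_mul _
  have intPhi : IntegrableOn (phi α k) (Set.Ioo a b) := by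
    apply Integrable.mono' intB ((phi_meas α k).aestronglyMeasurable)
    filter_upwards [ae_restrict_mem measurableSet_Ioo] with u hu
    have h0u : 0 ≤ u := ha.trans hu.1.le
    rw [Real.norm_eq_abs, abs_of_nonneg (le_trans (by positivity) (key u hu).1)]
    exact (key u hu).2
  have hep : α + 3/2 = (α + 1/2) + 1 := by ring
  have hcalc : ∀ D : ℝ, (∫ u in Set.Ioo a b, D * (k:ℝ)^(α/2) * u ^ (α+1/2:ℝ))
      = D * (k:ℝ)^(α/2) * ((b ^ (α+3/2:ℝ) - a ^ (α+3/2:ℝ))/(α+3/2)) := by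
    intro D
    rw [MeasureTheory.integral_const_mul, hep, rpow_Ioo_integral a b _ hab hp.le]
  refine ⟨intPhi, ?_, ?_⟩
  · rw [← hcalc A]
    exact setIntegral_mono_on intA intPhi measurableSet_Ioo (fun u hu => (key u hu).1)
  · rw [← hcalc B]
    exact setIntegral_mono_on intPhi intB measurableSet_Ioo (fun u hu => (key u hu).2)

lemma pairing_split (α c : ℝ) (hc : 0 < c) (δ : ℝ) (hδ0 : 0 < δ)
    (K k : ℕ)
    (hint1 : IntegrableOn (phi α k)
      (Set.Ioo (c*δ*(K:ℝ)^(-(1:ℝ)/2)) (c*(K:ℝ)^(-(1:ℝ)/2))))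
    (hint2 : IntegrableOn (phi α k) (Set.Ioo 0 (c*δ*(K:ℝ)^(-(1:ℝ)/2)))) :
    (∫ u in Set.Ioi (0:ℝ), atomFun c δ K u * phi α k u)
      = (δ * Real.sqrt K / (c*(1-δ))) *
          (∫ u in Set.Ioo (c*δ*(K:ℝ)^(-(1:ℝ)/2)) (c*(K:ℝ)^(-(1:ℝ)/2)), phi α k u)
        - (Real.sqrt K / c) *
          (∫ u in Set.Ioo (0:ℝ) (c*δ*(K:ℝ)^(-(1:ℝ)/2)), phi α k u) := by
  set s : ℝ := c*δ*(K:ℝ)^(-(1:ℝ)/2) with hs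
  set t : ℝ := c*(K:ℝ)^(-(1:ℝ)/2) with ht
  have hs0 : 0 ≤ s := by positivity
  have hsub1 : Set.Ioo s t ⊆ Set.Ioi (0:ℝ) := fun u hu => hs0.trans_lt hu.1
  have hsub2 : Set.Ioo (0:ℝ) s ⊆ Set.Ioi (0:ℝ) := fun u hu => hu.1
  have hsplit : ∀ u, atomFun c δ K u * phi α k u =
      (Set.Ioo s t).indicator (fun u => (δ * Real.sqrt K / (c*(1-δ))) * phi α k u) u +
      (Set.Ioo 0 s).indicator (fun u => (-(Real.sqrt K / c)) * phi α k u) u := by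
    intro u
    simp only [atomFun, Set.indicator_apply, ← hs, ← ht]
    split_ifs <;> ring
  have int1 : Integrable ((Set.Ioo s t).indicator
      (fun u => (δ * Real.sqrt K / (c*(1-δ))) * phi α k u)) (volume.restrict (Set.Ioi 0)) := by
    rw [MeasureTheory.integrable_indicator_iff measurableSet_Ioo, IntegrableOn,
      Measure.restrict_restrict measurableSet_Ioo, Set.inter_eq_self_of_subset_left hsub1]
    exact hint1.const_mul _
  have int2 : Integrable ((Set.Ioo (0:ℝ) s).indicator
      (fun u => (-(Real.sqrt K / c)) * phi α k u)) (volume.restrict (Set.Ioi 0)) := by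
    rw [MeasureTheory.integrable_indicator_iff measurableSet_Ioo, IntegrableOn,
      Measure.restrict_restrict measurableSet_Ioo, Set.inter_eq_self_of_subset_left hsub2]
    exact hint2.const_mul _
  simp only [hsplit]
  rw [MeasureTheory.integral_add int1 int2,
    MeasureTheory.setIntegral_indicator measurableSet_Ioo,
    MeasureTheory.setIntegral_indicator measurableSet_Ioo,
    Set.inter_eq_self_of_subset_right hsub1, Set.inter_eq_self_of_subset_right hsub2,
    MeasureTheory.integral_const_mul, MeasureTheory.integral_const_mul]
  ring

lemma alg_id (A B c δ β κ R T e : ℝ) (hβ : β ≠ 0) (hc : c ≠ 0) (h1δ : (1:ℝ)-δ ≠ 0) :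
    (κ * (R / c) * T * β⁻¹) * (δ * (1-δ)⁻¹ * (A*(1-e)) - B * e)
    = (δ * R / (c*(1-δ))) * (A * κ * ((T - e*T)/β)) - (R/c) * (B * κ * ((e*T - 0)/β)) := by
  field_simp
  ring

lemma pairing_lb (α A B c : ℝ) (hα : -(1/2:ℝ) < α) (hA : 0 < A) (hB : 0 < B) (hc : 0 < c)
    (hbound : ∀ k : ℕ, 1 ≤ k → ∀ u : ℝ, 0 < u → u ≤ c / Real.sqrt k →
      A * (k : ℝ) ^ (α / 2) * u ^ (α + 1 / 2 : ℝ) ≤ phi α k u ∧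
        phi α k u ≤ B * (k : ℝ) ^ (α / 2) * u ^ (α + 1 / 2 : ℝ))
    (δ : ℝ) (hδ0 : 0 < δ) (hδ4 : δ ≤ 1/4) (hδB : B * δ ^ (α+3/2:ℝ) ≤ A/4 * δ)
    (K k : ℕ) (hK : 0 < K) (hk : 1 ≤ k) (hkK : k ≤ K) :
    (A*δ/4) * (α+3/2)⁻¹ * (k:ℝ)^(α/2) * (Real.sqrt K / c) * (c*(K:ℝ)^(-(1:ℝ)/2))^(α+3/2:ℝ)
      ≤ ∫ u in Set.Ioi (0:ℝ), atomFun c δ K u * phi α k u := by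
  have hβ : (0:ℝ) < α + 3/2 := by linarith
  have hβ1 : (1:ℝ) ≤ α + 3/2 := by linarith
  have hKpos : (0:ℝ) < (K:ℝ) := by exact_mod_cast hK
  have hX : (0:ℝ) < (K:ℝ)^(-(1:ℝ)/2) := Real.rpow_pos_of_pos hKpos _
  have hs0 : (0:ℝ) ≤ c*δ*(K:ℝ)^(-(1:ℝ)/2) := by positivity
  have ht0 : (0:ℝ) < c*(K:ℝ)^(-(1:ℝ)/2) := by positivity
  have hst : c*δ*(K:ℝ)^(-(1:ℝ)/2) ≤ c*(K:ℝ)^(-(1:ℝ)/2) := by nlinarith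
  have hXinv : (K:ℝ)^(-(1:ℝ)/2) = (Real.sqrt K)⁻¹ := by
    rw [show (-(1:ℝ)/2) = -(1/2 : ℝ) by norm_num, Real.rpow_neg hKpos.le,
      ← Real.sqrt_eq_rpow]
  have hsqk : (0:ℝ) < Real.sqrt k := Real.sqrt_pos.2 (by exact_mod_cast hk)
  have htc : c*(K:ℝ)^(-(1:ℝ)/2) ≤ c / Real.sqrt k := by
    rw [hXinv, ← div_eq_mul_inv]
    exact div_le_div_of_nonneg_left hc.le hsqk
      (Real.sqrt_le_sqrt (by exact_mod_cast hkK))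
  have est1 := phi_est α A B c hα hA hbound k hk _ _ hs0 hst htc
  have est2 := phi_est α A B c hα hA hbound k hk 0 _ le_rfl hs0 (hst.trans htc)
  rw [pairing_split α c hc δ hδ0 K k est1.1 est2.1]
  have hzero : (0:ℝ) ^ (α+3/2:ℝ) = 0 := Real.zero_rpow (by linarith)
  set β : ℝ := α + 3/2 with hβdef
  set s : ℝ := c*δ*(K:ℝ)^(-(1:ℝ)/2) with hsdef
  set t : ℝ := c*(K:ℝ)^(-(1:ℝ)/2) with htdef
  have hJ1 : A * (k:ℝ)^(α/2) * ((t^β - s^β)/β) ≤ ∫ u in Set.Ioo s t, phi α k u := est1.2.1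
  have hJ2 : (∫ u in Set.Ioo (0:ℝ) s, phi α k u) ≤ B * (k:ℝ)^(α/2) * ((s^β - 0)/β) := by
    have h := est2.2.2; rwa [hzero] at h
  clear est1 est2 hbound
  have h1δ : (0:ℝ) < 1 - δ := by linarith
  have hv1 : 0 ≤ δ * Real.sqrt K / (c*(1-δ)) := by positivity
  have hv2 : 0 ≤ Real.sqrt K / c := by positivity
  have hstep : (δ * Real.sqrt K / (c*(1-δ))) * (A * (k:ℝ)^(α/2) * ((t^β - s^β)/β))
      - (Real.sqrt K / c) * (B * (k:ℝ)^(α/2) * ((s^β - 0)/β))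
      ≤ (δ * Real.sqrt K / (c*(1-δ))) * (∫ u in Set.Ioo s t, phi α k u)
        - (Real.sqrt K / c) * (∫ u in Set.Ioo (0:ℝ) s, phi α k u) := by
    gcongr
  refine le_trans ?_ hstep
  clear hstep hJ1 hJ2
  have hδβδ : δ ^ β ≤ δ := by
    calc δ ^ β ≤ δ ^ (1:ℝ) := Real.rpow_le_rpow_of_exponent_ge hδ0 (by linarith) hβ1
    _ = δ := Real.rpow_one δ
  have hδβ0 : 0 ≤ δ ^ β := Real.rpow_nonneg hδ0.le _
  have key : A*δ/4 ≤ δ * (1-δ)⁻¹ * (A*(1-δ^β)) - B * δ^β := by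
    have hinv : (1:ℝ) ≤ (1-δ)⁻¹ := by
      rw [le_inv_comm₀ one_pos h1δ]; linarith
    have h34 : (3:ℝ)/4 ≤ 1 - δ^β := by linarith
    have hPnn : (0:ℝ) ≤ A*(1-δ^β) := by nlinarith
    have e1 : δ * 1 * (A*(1-δ^β)) ≤ δ * (1-δ)⁻¹ * (A*(1-δ^β)) :=
      mul_le_mul_of_nonneg_right (mul_le_mul_of_nonneg_left hinv hδ0.le) hPnn
    have e2 : A * (3/4) ≤ A * (1-δ^β) := mul_le_mul_of_nonneg_left h34 hA.le
    have e3 : δ * (A * (3/4)) ≤ δ * (A*(1-δ^β)) := mul_le_mul_of_nonneg_left e2 hδ0.le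
    have hδB' : B * δ ^ β ≤ A/4 * δ := hδB
    nlinarith [e1, e3, hδB']
  have hκ : (0:ℝ) ≤ (k:ℝ)^(α/2) := Real.rpow_nonneg (Nat.cast_nonneg k) _
  have hT : (0:ℝ) ≤ t ^ β := Real.rpow_nonneg ht0.le _
  have hfac : (0:ℝ) ≤ (k:ℝ)^(α/2) * (Real.sqrt K / c) * (t^β) * β⁻¹ :=
    mul_nonneg (mul_nonneg (mul_nonneg hκ hv2) hT) (inv_nonneg.2 hβ.le)
  have hsβ : s ^ β = δ ^ β * t ^ β := by
    rw [show s = δ * t by rw [hsdef, htdef]; ring, Real.mul_rpow hδ0.le ht0.le]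
  rw [hsβ]
  calc (A*δ/4) * β⁻¹ * (k:ℝ)^(α/2) * (Real.sqrt K / c) * t^β
      = ((k:ℝ)^(α/2) * (Real.sqrt K / c) * (t^β) * β⁻¹) * (A*δ/4) := by ring
    _ ≤ ((k:ℝ)^(α/2) * (Real.sqrt K / c) * (t^β) * β⁻¹) *
        (δ * (1-δ)⁻¹ * (A*(1-δ^β)) - B * δ^β) := mul_le_mul_of_nonneg_left key hfac
    _ = (δ * Real.sqrt K / (c*(1-δ))) * (A * (k:ℝ)^(α/2) * ((t^β - δ^β * t^β)/β))
      - (Real.sqrt K / c) * (B * (k:ℝ)^(α/2) * ((δ^β * t^β - 0)/β)) :=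
        alg_id A B c δ β ((k:ℝ)^(α/2)) (Real.sqrt K) (t^β) (δ^β) hβ.ne' hc.ne' h1δ.ne'

lemma atom_part (c δ : ℝ) (hc : 0 < c) (hδ0 : 0 < δ) (hδ : δ < 1/2) (K : ℕ) (hK : 0 < K) :
    IsH1PlusAtom1 (fun u => (1:ℝ)⁻¹ * atomFun c δ K u) := by
  have hKpos : (0:ℝ) < (K:ℝ) := by exact_mod_cast hK
  have hX : (0:ℝ) < (K:ℝ)^(-(1:ℝ)/2) := Real.rpow_pos_of_pos hKpos _
  have hKr : Real.sqrt K * (K:ℝ)^(-(1:ℝ)/2) = 1 := by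
    rw [show (-(1:ℝ)/2) = -(1/2:ℝ) by norm_num, Real.rpow_neg hKpos.le,
      ← Real.sqrt_eq_rpow, mul_inv_cancel₀ (Real.sqrt_pos.2 hKpos).ne']
  have h1δ : (0:ℝ) < 1 - δ := by linarith
  set s : ℝ := c * δ * ((K:ℝ)^(-(1:ℝ)/2)) with hsdef
  set t : ℝ := c * ((K:ℝ)^(-(1:ℝ)/2)) with htdef
  have hs0 : 0 < s := by positivity
  have ht0 : 0 < t := by positivity
  have hst : s < t := by rw [hsdef, htdef]; nlinarith
  have hball : Metric.ball (0:ℝ) t ∩ Set.Ici 0 = Set.Ico 0 t := by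
    rw [Real.ball_eq_Ioo]
    ext x
    simp only [Set.mem_inter_iff, Set.mem_Ioo, Set.mem_Ici, Set.mem_Ico]
    constructor
    · rintro ⟨⟨h1, h2⟩, h3⟩; exact ⟨h3, by linarith⟩
    · rintro ⟨h1, h2⟩; exact ⟨⟨by linarith, by linarith⟩, h1⟩
  have hXinv : ((K:ℝ)^(-(1:ℝ)/2))⁻¹ = Real.sqrt K := inv_eq_of_mul_eq_one_left hKr
  have hvol : ((volume (Metric.ball (0:ℝ) t ∩ Set.Ici 0)).toReal)⁻¹ = Real.sqrt K / c := by
    rw [hball, Real.volume_Ico, sub_zero, ENNReal.toReal_ofReal ht0.le, htdef,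
      mul_inv, hXinv]
    ring
  refine ⟨?_, 0, t, ht0, ?_, ?_, ?_⟩
  · exact (((measurable_const.indicator measurableSet_Ioo).add
      (measurable_const.indicator measurableSet_Ioo)) : Measurable (atomFun c δ K)).const_mul _
  · intro u hu
    have hu' : atomFun c δ K u ≠ 0 := by
      simp only [Function.mem_support] at hu
      intro h; apply hu; simp [h]
    have hmem : u ∈ Set.Ioo (0:ℝ) t := by
      by_contra hmem
      apply hu'
      unfold atomFun
      rw [← hsdef, ← htdef]
      rw [Set.indicator_of_notMem, Set.indicator_of_notMem, add_zero]
      · rintro ⟨h1, h2⟩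
        exact hmem ⟨h1, lt_of_lt_of_le h2 hst.le⟩
      · rintro ⟨h1, h2⟩
        exact hmem ⟨lt_trans hs0 h1, h2⟩
    refine ⟨?_, hmem.1.le⟩
    rw [Metric.mem_ball, Real.dist_eq, sub_zero, abs_of_pos hmem.1]
    exact hmem.2
  · simp only [inv_one, one_mul]
    unfold atomFun
    rw [MeasureTheory.integral_add]
    · rw [MeasureTheory.integral_indicator_const _ measurableSet_Ioo,
        MeasureTheory.integral_indicator_const _ measurableSet_Ioo,
        ← hsdef, ← htdef,
        Real.volume_real_Ioo_of_le (by linarith : s ≤ t),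
        Real.volume_real_Ioo_of_le (by linarith : (0:ℝ) ≤ s),
        smul_eq_mul, smul_eq_mul, hsdef, htdef]
      field_simp
      nlinarith [hKr]
    · exact (MeasureTheory.integrable_indicator_iff measurableSet_Ioo).2
        (integrableOn_const measure_Ioo_lt_top.ne)
    · exact (MeasureTheory.integrable_indicator_iff measurableSet_Ioo).2
        (integrableOn_const measure_Ioo_lt_top.ne)
  · intro u
    rw [hvol]
    simp only [inv_one, one_mul]
    unfold atomFun
    rw [← hsdef, ← htdef]
    have hsqK : (0:ℝ) ≤ Real.sqrt K := Real.sqrt_nonneg _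
    by_cases h1 : u ∈ Set.Ioo s t
    · have h2 : u ∉ Set.Ioo (0:ℝ) s := fun h => absurd h1.1 (not_lt.2 h.2.le)
      rw [Set.indicator_of_mem h1, Set.indicator_of_notMem h2, add_zero,
        abs_of_nonneg (div_nonneg (by positivity) (by nlinarith))]
      rw [div_le_div_iff₀ (by nlinarith) hc]
      nlinarith [mul_nonneg (mul_nonneg hsqK hc.le) (by linarith : (0:ℝ) ≤ 1 - 2*δ)]
    · rw [Set.indicator_of_notMem h1, zero_add]
      by_cases h2 : u ∈ Set.Ioo (0:ℝ) s
      · rw [Set.indicator_of_mem h2, abs_neg, abs_of_nonneg (by positivity)]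
      · rw [Set.indicator_of_notMem h2, abs_zero]
        positivity

lemma alg2 (c x y z w v : ℝ) (hc : c ≠ 0) :
    v * x * (y / c) * (z * c * w) = v * z * (x * (y * w)) := by
  field_simp

set_option maxHeartbeats 1000000 in
/-- Sharpness construction for the Laguerre system of Hermite type, `α > -1/2`:
given the two-sided bound near the origin with constants `A, B, c`, there is
`δ ∈ (0,1/2)` (depending only on `α`) such that for every `K ≥ 1` the function
`atomFun c δ K` is, up to a universal constant multiple `m`, an `H¹(ℝ₊)`-atom and
`∑_k |⟨a,φ_k^α⟩|/(k+1)^{3/4-ε} ≳ K^ε`. -/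
theorem sharpness_atom (α : ℝ) (hα : -(1 / 2 : ℝ) < α) (ε : ℝ) (hε : 0 < ε)
    (A B c : ℝ) (hA : 0 < A) (hB : 0 < B) (hc : 0 < c)
    (hbound : ∀ k : ℕ, 1 ≤ k → ∀ u : ℝ, 0 < u → u ≤ c / Real.sqrt k →
      A * (k : ℝ) ^ (α / 2) * u ^ (α + 1 / 2 : ℝ) ≤ phi α k u ∧
        phi α k u ≤ B * (k : ℝ) ^ (α / 2) * u ^ (α + 1 / 2 : ℝ)) :
    ∃ δ : ℝ, δ ∈ Set.Ioo (0 : ℝ) (1 / 2) ∧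
      ∃ m C₂ : ℝ, 0 < m ∧ 0 < C₂ ∧ ∀ K : ℕ, 0 < K →
        IsH1PlusAtom1 (fun u => m⁻¹ * atomFun c δ K u) ∧
        ENNReal.ofReal (C₂ * (K : ℝ) ^ ε) ≤
          ∑' k : ℕ, ENNReal.ofReal
            (|∫ u in Set.Ioi (0 : ℝ), atomFun c δ K u * phi α k u| /
              ((k : ℝ) + 1) ^ (3 / 4 - ε : ℝ)) := by
  have hx : (0:ℝ) < A/(4*B) := by positivity
  have hβ1 : (0:ℝ) < α + 1/2 := by linarith
  set δ : ℝ := min (1/4) ((A/(4*B)) ^ ((α+1/2:ℝ)⁻¹)) with hδdef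
  have hδ0 : 0 < δ := lt_min (by norm_num) (Real.rpow_pos_of_pos hx _)
  have hδ4 : δ ≤ 1/4 := min_le_left _ _
  have hδhalf : δ < 1/2 := lt_of_le_of_lt hδ4 (by norm_num)
  have hδB : B * δ ^ (α+3/2:ℝ) ≤ A/4 * δ := by
    have h1 : δ ^ (α+1/2:ℝ) ≤ A/(4*B) := by
      calc δ ^ (α+1/2:ℝ) ≤ ((A/(4*B)) ^ ((α+1/2:ℝ)⁻¹)) ^ (α+1/2:ℝ) :=
            Real.rpow_le_rpow hδ0.le (min_le_right _ _) hβ1.le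
        _ = A/(4*B) := by
            rw [← Real.rpow_mul hx.le, inv_mul_cancel₀ hβ1.ne', Real.rpow_one]
    have h2 : δ ^ (α+3/2:ℝ) = δ ^ (α+1/2:ℝ) * δ := by
      rw [show (α+3/2:ℝ) = (α+1/2)+1 by ring, Real.rpow_add_one hδ0.ne']
    calc B * δ ^ (α+3/2:ℝ) = B * δ ^ (α+1/2:ℝ) * δ := by rw [h2]; ring
      _ ≤ B * (A/(4*B)) * δ :=
          mul_le_mul_of_nonneg_right (mul_le_mul_of_nonneg_left h1 hB.le) hδ0.le
      _ = A/4 * δ := by field_simp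
  set γ : ℝ := min 1 ((1/2:ℝ) ^ (α/2:ℝ)) with hγdef
  have hγ0 : 0 < γ := lt_min one_pos (Real.rpow_pos_of_pos (by norm_num) _)
  have hγ1 : γ ≤ 1 := min_le_left _ _
  set p : ℝ := 3/4 - ε with hpdef
  set N : ℝ := (A*δ/4) * (α+3/2:ℝ)⁻¹ * c ^ (α+1/2:ℝ) with hNdef
  have hN0 : 0 < N := by
    apply mul_pos (mul_pos (by positivity) (inv_pos.2 (by linarith)))
    exact Real.rpow_pos_of_pos hc _
  set C₃ : ℝ := N * γ * ((2:ℝ) ^ |p|)⁻¹ with hC₃def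
  have h2p : (0:ℝ) < (2:ℝ) ^ |p| := Real.rpow_pos_of_pos (by norm_num) _
  have hC₃0 : 0 < C₃ := by
    apply mul_pos (mul_pos hN0 hγ0) (inv_pos.2 h2p)
  refine ⟨δ, ⟨hδ0, hδhalf⟩, 1, C₃/2, one_pos, by positivity, fun K hK => ?_⟩
  have hKpos : (0:ℝ) < (K:ℝ) := by exact_mod_cast hK
  have hK1 : (1:ℝ) ≤ (K:ℝ) := by exact_mod_cast hK
  refine ⟨atom_part c δ hc hδ0 hδhalf K hK, ?_⟩
  -- per-term lower bound
  have key : ∀ k ∈ Finset.Ioc (K/2) K, C₃ * (K:ℝ)^(ε-1) ≤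
      |∫ u in Set.Ioi (0 : ℝ), atomFun c δ K u * phi α k u| / ((k : ℝ) + 1) ^ (3 / 4 - ε : ℝ) := by
    intro k hkS
    rw [Finset.mem_Ioc] at hkS
    obtain ⟨hk1n, hk2n⟩ := hkS
    have hk1 : 1 ≤ k := by omega
    have hK2k : (K:ℝ) ≤ 2*(k:ℝ) := by exact_mod_cast (by omega : K ≤ 2*k)
    have hkK : (k:ℝ) ≤ (K:ℝ) := by exact_mod_cast hk2n
    have hkpos : (0:ℝ) < (k:ℝ) := by exact_mod_cast hk1
    have lb := pairing_lb α A B c hα hA hB hc hbound δ hδ0 hδ4 hδB K k hK hk1 hk2n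
    -- rewrite the lower bound value
    have hval : (A*δ/4) * (α+3/2:ℝ)⁻¹ * (k:ℝ)^(α/2) * (Real.sqrt K / c) *
        (c*(K:ℝ)^(-(1:ℝ)/2))^(α+3/2:ℝ)
        = N * ((k:ℝ)^(α/2) * (K:ℝ)^((-α/2:ℝ) - 1/4)) := by
      rw [Real.mul_rpow hc.le (Real.rpow_pos_of_pos hKpos _).le,
        ← Real.rpow_mul hKpos.le, Real.sqrt_eq_rpow,
        show (c:ℝ)^(α+3/2:ℝ) = c^(α+1/2:ℝ) * c by
          rw [show (α+3/2:ℝ) = (α+1/2)+1 by ring, Real.rpow_add_one hc.ne'],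
        hNdef]
      have hKK : (K:ℝ)^((-α/2:ℝ) - 1/4) = (K:ℝ)^((1:ℝ)/2) * (K:ℝ)^(-(1:ℝ)/2*(α+3/2)) := by
        rw [← Real.rpow_add hKpos]; congr 1; ring
      rw [hKK]
      exact alg2 c ((k:ℝ)^(α/2)) ((K:ℝ)^((1:ℝ)/2)) (c^(α+1/2:ℝ))
        ((K:ℝ)^(-(1:ℝ)/2*(α+3/2))) (A*δ/4*(α+3/2:ℝ)⁻¹) hc.ne' 
    rw [hval] at lb
    have hlbabs : N * ((k:ℝ)^(α/2) * (K:ℝ)^((-α/2:ℝ) - 1/4)) ≤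
        |∫ u in Set.Ioi (0 : ℝ), atomFun c δ K u * phi α k u| :=
      lb.trans (le_abs_self _)
    -- k^{α/2} ≥ γ K^{α/2}
    have hγK : γ * (K:ℝ)^(α/2) ≤ (k:ℝ)^(α/2) := by
      rcases le_or_gt 0 α with hα0 | hα0
      · have hhalf : (K:ℝ) * (1/2) ≤ (k:ℝ) := by linarith
        have h1 : ((K:ℝ) * (1/2))^(α/2:ℝ) ≤ (k:ℝ)^(α/2) :=
          Real.rpow_le_rpow (by positivity) hhalf (by positivity)
        rw [Real.mul_rpow hKpos.le (by norm_num)] at h1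
        calc γ * (K:ℝ)^(α/2) ≤ (1/2:ℝ)^(α/2:ℝ) * (K:ℝ)^(α/2) :=
              mul_le_mul_of_nonneg_right (min_le_right _ _) (Real.rpow_nonneg hKpos.le _)
          _ ≤ (k:ℝ)^(α/2) := by linarith [h1]
      · have h1 : (K:ℝ)^(α/2:ℝ) ≤ (k:ℝ)^(α/2) :=
          Real.rpow_le_rpow_of_nonpos hkpos hkK (by linarith)
        calc γ * (K:ℝ)^(α/2) ≤ 1 * (K:ℝ)^(α/2) :=
              mul_le_mul_of_nonneg_right hγ1 (Real.rpow_nonneg hKpos.le _)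
          _ ≤ (k:ℝ)^(α/2) := by rw [one_mul]; exact h1
    -- denominator bound
    have hden : ((k:ℝ)+1)^(3/4-ε:ℝ) ≤ (2:ℝ)^|p| * (K:ℝ)^(3/4-ε:ℝ) := by
      rcases le_or_gt 0 (3/4-ε : ℝ) with hp0 | hp0
      · have habs : |p| = p := abs_of_nonneg hp0
        have h1 : ((k:ℝ)+1) ≤ 2*(K:ℝ) := by linarith
        calc ((k:ℝ)+1)^(3/4-ε:ℝ) ≤ (2*(K:ℝ))^(3/4-ε:ℝ) :=
              Real.rpow_le_rpow (by positivity) h1 hp0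
          _ = (2:ℝ)^(3/4-ε:ℝ) * (K:ℝ)^(3/4-ε:ℝ) := Real.mul_rpow (by norm_num) hKpos.le
          _ = (2:ℝ)^|p| * (K:ℝ)^(3/4-ε:ℝ) := by rw [habs, hpdef]
      · have habs : |p| = -(3/4-ε) := by rw [hpdef]; exact abs_of_neg hp0
        have h1 : (K:ℝ)*(1/2) ≤ (k:ℝ)+1 := by linarith
        calc ((k:ℝ)+1)^(3/4-ε:ℝ) ≤ ((K:ℝ)*(1/2))^(3/4-ε:ℝ) :=
              Real.rpow_le_rpow_of_nonpos (by positivity) h1 hp0.le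
          _ = (K:ℝ)^(3/4-ε:ℝ) * ((1/2:ℝ))^(3/4-ε:ℝ) := Real.mul_rpow hKpos.le (by norm_num)
          _ = (2:ℝ)^|p| * (K:ℝ)^(3/4-ε:ℝ) := by
              rw [habs, show ((1:ℝ)/2) = (2:ℝ)⁻¹ by norm_num,
                ← Real.rpow_neg_one (2:ℝ), ← Real.rpow_mul (by norm_num : (0:ℝ) ≤ 2)]
              rw [show (-1 : ℝ) * (3/4-ε) = -(3/4-ε) by ring]
              ring
    -- combine
    have hnum : N * (γ * (K:ℝ)^(α/2) * (K:ℝ)^((-α/2:ℝ) - 1/4)) ≤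
        |∫ u in Set.Ioi (0 : ℝ), atomFun c δ K u * phi α k u| := by
      refine le_trans ?_ hlbabs
      apply mul_le_mul_of_nonneg_left
        (mul_le_mul_of_nonneg_right hγK (Real.rpow_nonneg hKpos.le _)) hN0.le
    have hdiv : N * (γ * (K:ℝ)^(α/2) * (K:ℝ)^((-α/2:ℝ) - 1/4)) / ((2:ℝ)^|p| * (K:ℝ)^(3/4-ε:ℝ))
        ≤ |∫ u in Set.Ioi (0 : ℝ), atomFun c δ K u * phi α k u| / ((k : ℝ) + 1) ^ (3/4-ε : ℝ) :=
      div_le_div₀ (abs_nonneg _) hnum (Real.rpow_pos_of_pos (by positivity) _) hden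
    refine le_trans (le_of_eq ?_) hdiv
    have hKp : (0:ℝ) < (K:ℝ)^(3/4-ε:ℝ) := Real.rpow_pos_of_pos hKpos _
    have hcollapse : (K:ℝ)^(α/2) * (K:ℝ)^((-α/2:ℝ) - 1/4) / (K:ℝ)^(3/4-ε:ℝ) = (K:ℝ)^(ε-1) := by
      rw [← Real.rpow_add hKpos, ← Real.rpow_sub hKpos]
      congr 1; ring
    rw [hC₃def, ← hcollapse]
    field_simp
  -- sum over the finset
  calc ENNReal.ofReal (C₃/2 * (K:ℝ)^ε)
      ≤ ∑ k ∈ Finset.Ioc (K/2) K, ENNReal.ofReal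
          (|∫ u in Set.Ioi (0 : ℝ), atomFun c δ K u * phi α k u| /
            ((k : ℝ) + 1) ^ (3 / 4 - ε : ℝ)) := by
        have h2 := Finset.card_nsmul_le_sum (Finset.Ioc (K/2) K) _ _
          (fun k hk => ENNReal.ofReal_le_ofReal (key k hk))
        refine le_trans ?_ h2
        have hreal : C₃/2 * (K:ℝ)^ε ≤ ((Finset.Ioc (K/2) K).card : ℝ) * (C₃ * (K:ℝ)^(ε-1)) := ?_
        · calc ENNReal.ofReal (C₃/2 * (K:ℝ)^ε)
              ≤ ENNReal.ofReal (((Finset.Ioc (K/2) K).card : ℝ) * (C₃ * (K:ℝ)^(ε-1))) :=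
                ENNReal.ofReal_le_ofReal hreal
            _ = ENNReal.ofReal (((Finset.Ioc (K/2) K).card : ℝ)) *
                  ENNReal.ofReal (C₃ * (K:ℝ)^(ε-1)) :=
                ENNReal.ofReal_mul (Nat.cast_nonneg _)
            _ = (Finset.Ioc (K/2) K).card • ENNReal.ofReal (C₃ * (K:ℝ)^(ε-1)) := by
                rw [ENNReal.ofReal_natCast, nsmul_eq_mul]
        have hcard : K ≤ 2 * (Finset.Ioc (K/2) K).card := by
          rw [Nat.card_Ioc]; omega
        have hcardr : (K:ℝ) ≤ 2 * ((Finset.Ioc (K/2) K).card : ℝ) := by exact_mod_cast hcard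
        have hKe : (K:ℝ)^ε = (K:ℝ)^(ε-1) * K := by
          rw [show ε = (ε-1)+1 by ring, Real.rpow_add_one hKpos.ne']; ring_nf
        have hnn : (0:ℝ) ≤ C₃ * (K:ℝ)^(ε-1) / 2 :=
          div_nonneg (mul_nonneg hC₃0.le (Real.rpow_nonneg hKpos.le _)) (by norm_num)
        calc C₃/2 * (K:ℝ)^ε = (C₃ * (K:ℝ)^(ε-1) / 2) * (K:ℝ) := by rw [hKe]; ring
          _ ≤ (C₃ * (K:ℝ)^(ε-1) / 2) * (2 * ((Finset.Ioc (K/2) K).card : ℝ)) :=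
              mul_le_mul_of_nonneg_left hcardr hnn
          _ = ((Finset.Ioc (K/2) K).card : ℝ) * (C₃ * (K:ℝ)^(ε-1)) := by ring
    _ ≤ ∑' k : ℕ, ENNReal.ofReal
          (|∫ u in Set.Ioi (0 : ℝ), atomFun c δ K u * phi α k u| /
            ((k : ℝ) + 1) ^ (3 / 4 - ε : ℝ)) := ENNReal.sum_le_tsum _
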